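/- Let n ∈ ℕ, let 0 < χ < 1, and let k ∈ ℕ with 2 ≤ k ≤ n and k ≤ 1/χ. For the (1+1) EA with mutation rate χ on BinVal, the expected number of iterations until the first k bits are all set to 1 satisfies E[T_k] ≥ (1/2)·((1/χ) − 1)·ln(k)·(1 − e^{−1/2}); in particular E[T_k] = Ω((log k)/χ). -/

import Mathlib

open scoped BigOperators ENNReal

noncomputable section

/-- `BinVal` on bit strings of length `n`: index `0` (bit number `1`) is the most
significant bit, with weight `2 ^ (n - 1 - i)`. -/
def binVal (n : ℕ) (x : Fin n → Bool) : ℕ :=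
  ∑ i : Fin n, if x i then 2 ^ (n - 1 - (i : ℕ)) else 0

/-- Probability that standard bit mutation with rate `χ` turns `x` into `y`. -/
def flipProb (n : ℕ) (χ : ℝ) (x y : Fin n → Bool) : ℝ :=
  ∏ i : Fin n, if x i = y i then 1 - χ else χ

/-- Elitist selection of the (1+1) EA on BinVal. -/
def select (n : ℕ) (x y : Fin n → Bool) : Fin n → Bool :=
  if binVal n x ≤ binVal n y then y else x

/-- Transition kernel of the (1+1) EA with fixed mutation rate `χ` on BinVal. -/
def stepKer (n : ℕ) (χ : ℝ) (x x' : Fin n → Bool) : ℝ≥0∞ :=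
  ∑ y : Fin n → Bool,
    ENNReal.ofReal (flipProb n χ x y) * (if select n x y = x' then 1 else 0)

/-- `alive init step A t s` is the probability that the Markov chain with initial
distribution `init` and transition kernel `step` is in state `s` at time `t` and
has not yet visited the target set `A` (so `∑' s, alive init step A t s = P(T > t)`
for the first hitting time `T` of `A`). -/
def alive {σ : Type*} (init : σ → ℝ≥0∞) (step : σ → σ → ℝ≥0∞) (A : Set σ) :
    ℕ → σ → ℝ≥0∞
  | 0 => Aᶜ.indicator init
  | t + 1 => Aᶜ.indicator (fun s' => ∑' s, alive init step A t s * step s s')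

/-- Expected first hitting time `E[T] = ∑_{t ≥ 0} P(T > t)` of the target set `A`
for the Markov chain given by `init` and `step`. -/
def hitTimeExp {σ : Type*} (init : σ → ℝ≥0∞) (step : σ → σ → ℝ≥0∞) (A : Set σ) : ℝ≥0∞ :=
  ∑' t : ℕ, ∑' s : σ, alive init step A t s

/-- Target set: the first `k` bits are all `1`. -/
def firstKOnes (n k : ℕ) : Set (Fin n → Bool) :=
  {x | ∀ i : Fin n, (i : ℕ) < k → x i = true}

/-- Uniform initial distribution on `{0,1}^n`. -/
def uniformInit (n : ℕ) : (Fin n → Bool) → ℝ≥0∞ := fun _ => (2 : ℝ≥0∞)⁻¹ ^ n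


open Finset Filter
open scoped Topology

lemma sum_prod_bool (n : ℕ) (f : Fin n → Bool → ℝ) :
    ∑ y : Fin n → Bool, ∏ i, f i (y i) = ∏ i, (f i false + f i true) := by
  rw [← Fintype.prod_sum]
  simp [add_comm]

lemma flipProb_nonneg {n : ℕ} {χ : ℝ} (h0 : 0 ≤ χ) (h1 : χ ≤ 1) (x y : Fin n → Bool) :
    0 ≤ flipProb n χ x y :=
  Finset.prod_nonneg fun i _ => by by_cases h : x i = y i <;> simp [h] <;> linarith

lemma sum_flip_prod (n : ℕ) (χ : ℝ) (x : Fin n → Bool) (t : Finset (Fin n)) :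
    ∑ y : Fin n → Bool, flipProb n χ x y * (∏ i ∈ t, if y i ≠ x i then (1:ℝ) else 0)
      = χ ^ t.card := by
  classical
  have key : ∀ y : Fin n → Bool,
      flipProb n χ x y * (∏ i ∈ t, if y i ≠ x i then (1:ℝ) else 0)
        = ∏ i, ((fun i (b : Bool) => (if x i = b then 1-χ else χ) *
            (if i ∈ t then (if b ≠ x i then (1:ℝ) else 0) else 1)) i (y i)) := by
    intro y
    dsimp only
    rw [Finset.prod_mul_distrib, flipProb]
    congr 1
    rw [← Finset.univ_inter t, ← Finset.prod_ite_mem]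
    simp
  rw [Finset.sum_congr rfl fun y _ => key y,
    sum_prod_bool n (fun i (b : Bool) => (if x i = b then 1-χ else χ) *
      (if i ∈ t then (if b ≠ x i then (1:ℝ) else 0) else 1))]
  have h2 : ∀ i : Fin n,
      ((fun i (b : Bool) => (if x i = b then 1-χ else χ) *
        (if i ∈ t then (if b ≠ x i then (1:ℝ) else 0) else 1)) i false
      + (fun i (b : Bool) => (if x i = b then 1-χ else χ) *
        (if i ∈ t then (if b ≠ x i then (1:ℝ) else 0) else 1)) i true)
      = (if i ∈ t then χ else 1) := by
    intro i
    by_cases hi : i ∈ t <;> cases hx : x i <;> simp [hi, hx] <;> ring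
  rw [Finset.prod_congr rfl fun i _ => h2 i]
  rw [← Finset.univ_inter t, Finset.prod_ite_mem, Finset.univ_inter, Finset.prod_const]

lemma sum_flipProb (n : ℕ) (χ : ℝ) (x : Fin n → Bool) :
    ∑ y : Fin n → Bool, flipProb n χ x y = 1 := by
  have := sum_flip_prod n χ x ∅
  simpa using this


def Kset (n k : ℕ) : Finset (Fin n) := univ.filter (fun i => (i : ℕ) < k)

def Zc (n k : ℕ) (x : Fin n → Bool) : ℕ := ((Kset n k).filter (fun i => x i = false)).card


def phiR (n k : ℕ) (x : Fin n → Bool) : ℝ := Real.log (1 + Zc n k x)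

lemma kset_card (n k : ℕ) (hkn : k ≤ n) : (Kset n k).card = k := by
  classical
  have h : ∀ m ∈ Finset.range k, m < n := fun m hm => lt_of_lt_of_le (Finset.mem_range.mp hm) hkn
  have : Kset n k = (Finset.range k).attachFin h := by
    ext i
    simp [Kset, Finset.mem_attachFin]
  rw [this, Finset.card_attachFin, Finset.card_range]

lemma Zc_le (n k : ℕ) (hkn : k ≤ n) (x : Fin n → Bool) : Zc n k x ≤ k := by
  unfold Zc
  exact (Finset.card_filter_le _ _).trans (kset_card n k hkn).le

lemma sum_indicator_coord (n : ℕ) (i : Fin n) :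
    ∑ x : Fin n → Bool, (if x i = false then (1:ℝ) else 0) = 2 ^ (n - 1) := by
  classical
  have key : ∀ x : Fin n → Bool, (if x i = false then (1:ℝ) else 0)
      = ∏ j, ((fun j (b : Bool) => if j = i then (if b = false then (1:ℝ) else 0) else 1) j (x j)) := by
    intro x
    dsimp only
    rw [Finset.prod_ite_eq' univ i (fun j => if x j = false then (1:ℝ) else 0)]
    simp
  rw [Finset.sum_congr rfl fun x _ => key x,
    sum_prod_bool n (fun j (b : Bool) => if j = i then (if b = false then (1:ℝ) else 0) else 1)]
  have h2 : ∀ j : Fin n, (((fun j (b : Bool) => if j = i then (if b = false then (1:ℝ) else 0) else 1) j false)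
      + ((fun j (b : Bool) => if j = i then (if b = false then (1:ℝ) else 0) else 1) j true)) = if j = i then 1 else 2 := by
    intro j; by_cases hj : j = i <;> simp [hj]; norm_num
  rw [Finset.prod_congr rfl fun j _ => h2 j,
    ← Finset.mul_prod_erase univ _ (Finset.mem_univ i)]
  rw [Finset.prod_congr rfl (fun j hj => if_neg (Finset.ne_of_mem_erase hj)),
    Finset.prod_const, if_pos rfl, one_mul, Finset.card_erase_of_mem (Finset.mem_univ i)]
  simp

lemma sum_Zc (n k : ℕ) (hkn : k ≤ n) :
    ∑ x : Fin n → Bool, (Zc n k x : ℝ) = k * 2 ^ (n - 1) := by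
  classical
  have h1 : ∀ x : Fin n → Bool, (Zc n k x : ℝ) = ∑ i ∈ Kset n k, (if x i = false then (1:ℝ) else 0) := by
    intro x
    rw [Zc, Finset.card_filter]
    push_cast
    rfl
  rw [Finset.sum_congr rfl fun x _ => h1 x, Finset.sum_comm]
  rw [Finset.sum_congr rfl fun i _ => sum_indicator_coord n i, Finset.sum_const, kset_card n k hkn]
  simp [mul_comm]

lemma exp_3half_le : Real.exp (3/2) ≤ 9/2 := by
  have h1 : Real.exp 1 < 2.7182818286 := Real.exp_one_lt_d9
  have h2 : Real.exp (3/2) ^ 2 = Real.exp 1 ^ 3 := by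
    rw [sq, ← Real.exp_add, ← Real.exp_nat_mul]
    norm_num
  have h4 : Real.exp 1 ^ 3 < 2.7182818286 ^ 3 :=
    pow_lt_pow_left₀ h1 (Real.exp_pos 1).le (by norm_num)
  have h5 : (2.7182818286:ℝ) ^ 3 < 20.25 := by norm_num
  nlinarith [Real.exp_pos (3/2), h2, h4, h5]

lemma exp_linear {x : ℝ} (h0 : 0 ≤ x) (h1 : x ≤ 3/2) : Real.exp x ≤ 1 + (7/3)*x := by
  have hc := convexOn_exp.2 (Set.mem_univ (0:ℝ)) (Set.mem_univ (3/2:ℝ))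
    (show (0:ℝ) ≤ 1 - 2*x/3 by linarith) (show (0:ℝ) ≤ 2*x/3 by linarith)
    (show (1 - 2*x/3) + 2*x/3 = 1 by ring)
  simp only [smul_eq_mul, mul_zero, zero_add, Real.exp_zero] at hc
  have hx : 2*x/3 * (3/2) = x := by ring
  rw [hx] at hc
  have h3 := exp_3half_le
  nlinarith [hc, h3]

noncomputable section
open Finset

lemma numeric_sum (Z k : ℕ) (χ : ℝ) (hχ0 : 0 < χ) (hZk : Z ≤ k) (h32 : ((k:ℝ)+1)*χ ≤ 3/2) :
    ∑ j ∈ range Z, (Z.choose (j+1) : ℝ) * χ^(j+1) * (1/((Z:ℝ)-j)) ≤ (7/3)*χ := by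
  have hnat : ∀ j, j < Z → ((Z+1).choose (j+1)) * (Z-j) = Z.choose (j+1) * (Z+1) := by
    intro j hj
    have h1 : (Z+1).choose (j+1) = Z.choose j + Z.choose (j+1) := Nat.choose_succ_succ Z j
    have h2 : Z.choose (j+1) * (j+1) = Z.choose j * (Z - j) := Nat.choose_succ_right_eq Z j
    have h3 : (j+1) + (Z-j) = Z+1 := by omega
    rw [h1, add_mul, ← h2, ← mul_add, h3]
  have step1 : ∀ j ∈ range Z, (Z.choose (j+1) : ℝ) * χ^(j+1) * (1/((Z:ℝ)-j))
      = ((Z+1).choose (j+1) : ℝ) * χ^(j+1) * (1/((Z:ℝ)+1)) := by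
    intro j hj
    have hj' : j < Z := mem_range.mp hj
    have hd1 : (0:ℝ) < (Z:ℝ) - j := by
      have : (j:ℝ) < Z := by exact_mod_cast hj'
      linarith
    have hd2 : (0:ℝ) < (Z:ℝ) + 1 := by positivity
    have hr : (((Z+1).choose (j+1) : ℝ)) * ((Z:ℝ)-j) = (Z.choose (j+1) : ℝ) * ((Z:ℝ)+1) := by
      have := hnat j hj'
      have hcast : (((Z+1).choose (j+1) * (Z-j) : ℕ) : ℝ) = ((Z.choose (j+1) * (Z+1) : ℕ) : ℝ) := by
        exact_mod_cast congrArg (Nat.cast (R := ℝ)) this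
      push_cast [Nat.cast_sub hj'.le] at hcast
      linarith [hcast]
    field_simp
    nlinarith [hr, pow_pos hχ0 (j+1)]
  rw [Finset.sum_congr rfl step1]
  have step2 : ∑ j ∈ range Z, ((Z+1).choose (j+1) : ℝ) * χ^(j+1) * (1/((Z:ℝ)+1))
      ≤ ((1+χ)^(Z+1) - 1) * (1/((Z:ℝ)+1)) := by
    rw [← Finset.sum_mul]
    apply mul_le_mul_of_nonneg_right _ (by positivity)
    have hb : (χ + 1)^(Z+1) = ∑ m ∈ range (Z+2), χ^m * 1^(Z+1-m) * ((Z+1).choose m : ℝ) :=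
      add_pow χ 1 (Z+1)
    simp only [one_pow, mul_one] at hb
    have hsplit : ∑ m ∈ range (Z+2), χ^m * ((Z+1).choose m : ℝ)
        = (∑ j ∈ range (Z+1), χ^(j+1) * ((Z+1).choose (j+1) : ℝ)) + χ^0 * ((Z+1).choose 0 : ℝ) :=
      Finset.sum_range_succ' _ (Z+1)
    have hsplit2 : ∑ j ∈ range (Z+1), χ^(j+1) * ((Z+1).choose (j+1) : ℝ)
        = (∑ j ∈ range Z, χ^(j+1) * ((Z+1).choose (j+1) : ℝ)) + χ^(Z+1) * ((Z+1).choose (Z+1) : ℝ) :=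
      Finset.sum_range_succ _ Z
    have hnn : 0 ≤ χ^(Z+1) * ((Z+1).choose (Z+1) : ℝ) := by positivity
    have : ∑ j ∈ range Z, ((Z+1).choose (j+1) : ℝ) * χ^(j+1)
        = ∑ j ∈ range Z, χ^(j+1) * ((Z+1).choose (j+1) : ℝ) := by
      apply Finset.sum_congr rfl; intro j _; ring
    rw [this]
    have h1χ : (1+χ)^(Z+1) = (χ+1)^(Z+1) := by ring_nf
    rw [h1χ, hb, hsplit, hsplit2]
    simp
    linarith [hnn, pow_nonneg hχ0.le (Z+1)]
  have step3 : ((1+χ)^(Z+1) - 1) * (1/((Z:ℝ)+1)) ≤ (7/3)*χ := by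
    have hxle : ((Z:ℝ)+1)*χ ≤ 3/2 := by
      have : (Z:ℝ) ≤ k := by exact_mod_cast hZk
      nlinarith [hχ0]
    have hexp : (1+χ)^(Z+1) ≤ Real.exp (((Z:ℝ)+1)*χ) := by
      have h1 : 1+χ ≤ Real.exp χ := by linarith [Real.add_one_le_exp χ]
      calc (1+χ)^(Z+1) ≤ (Real.exp χ)^(Z+1) := by
            apply pow_le_pow_left₀ (by linarith) h1
        _ = Real.exp (((Z:ℝ)+1)*χ) := by
            rw [← Real.exp_nat_mul]
            push_cast; ring_nf
    have hlin : Real.exp (((Z:ℝ)+1)*χ) ≤ 1 + (7/3)*(((Z:ℝ)+1)*χ) :=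
      exp_linear (by positivity) hxle
    have hZ1 : (0:ℝ) < (Z:ℝ)+1 := by positivity
    calc ((1+χ)^(Z+1) - 1) * (1/((Z:ℝ)+1)) ≤ ((7/3)*(((Z:ℝ)+1)*χ)) * (1/((Z:ℝ)+1)) := by
          apply mul_le_mul_of_nonneg_right _ (by positivity)
          linarith
      _ = (7/3)*χ := by field_simp
  exact step2.trans step3

lemma log_telescope (Z B : ℕ) (hBZ : B ≤ Z) :
    Real.log (1+(Z:ℝ)) - Real.log (1+(Z:ℝ)-(B:ℝ))
      ≤ ∑ j ∈ range Z, (if j < B then 1/((Z:ℝ)-(j:ℝ)) else 0) := by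
  have tel : ∑ j ∈ range B, (Real.log (1+(Z:ℝ)-(j:ℝ)) - Real.log (1+(Z:ℝ)-((j:ℝ)+1)))
      = Real.log (1+(Z:ℝ)) - Real.log (1+(Z:ℝ)-(B:ℝ)) := by
    have h := Finset.sum_range_sub' (f := fun j : ℕ => Real.log (1+(Z:ℝ)-(j:ℝ))) B
    push_cast at h
    simpa using h
  rw [← tel]
  have hfilter : ∑ j ∈ range Z, (if j < B then 1/((Z:ℝ)-(j:ℝ)) else 0)
      = ∑ j ∈ range B, 1/((Z:ℝ)-(j:ℝ)) := by
    rw [← Finset.sum_filter]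
    congr 1
    ext j
    simp only [Finset.mem_filter, Finset.mem_range]
    omega
  rw [hfilter]
  apply Finset.sum_le_sum
  intro j hj
  have hjB : j < B := mem_range.mp hj
  have ha : (1:ℝ) ≤ (Z:ℝ)-(j:ℝ) := by
    have : (j:ℝ) + 1 ≤ (Z:ℝ) := by exact_mod_cast Nat.succ_le_of_lt (lt_of_lt_of_le hjB hBZ)
    linarith
  have ha0 : (0:ℝ) < (Z:ℝ)-(j:ℝ) := by linarith
  have heq : 1+(Z:ℝ)-((j:ℝ)+1) = (Z:ℝ)-(j:ℝ) := by ring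
  rw [heq]
  have hd : Real.log (1+(Z:ℝ)-(j:ℝ)) - Real.log ((Z:ℝ)-(j:ℝ))
      = Real.log ((1+((Z:ℝ)-(j:ℝ)))/((Z:ℝ)-(j:ℝ))) := by
    rw [Real.log_div (by linarith) (by linarith)]
    ring_nf
  rw [hd]
  have hle := Real.log_le_sub_one_of_pos
    (show (0:ℝ) < (1+((Z:ℝ)-(j:ℝ)))/((Z:ℝ)-(j:ℝ)) by positivity)
  have hfrac : (1+((Z:ℝ)-(j:ℝ)))/((Z:ℝ)-(j:ℝ)) - 1 = 1/((Z:ℝ)-(j:ℝ)) := by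
    field_simp
    ring
  linarith

lemma tail_bound (n : ℕ) (χ : ℝ) (hχ0 : 0 ≤ χ) (hχ1 : χ ≤ 1) (x : Fin n → Bool)
    (Zs : Finset (Fin n)) (j : ℕ) :
    ∑ y : Fin n → Bool, flipProb n χ x y *
        (if j < (Zs.filter (fun i => y i ≠ x i)).card then (1:ℝ) else 0)
      ≤ (Zs.card.choose (j+1) : ℝ) * χ^(j+1) := by
  classical
  have point : ∀ y : Fin n → Bool, (if j < (Zs.filter (fun i => y i ≠ x i)).card then (1:ℝ) else 0)
      ≤ ∑ t ∈ Zs.powersetCard (j+1), ∏ i ∈ t, (if y i ≠ x i then (1:ℝ) else 0) := by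
    intro y
    have hnn : ∀ t ∈ Zs.powersetCard (j+1), (0:ℝ) ≤ ∏ i ∈ t, (if y i ≠ x i then (1:ℝ) else 0) :=
      fun t _ => Finset.prod_nonneg fun i _ => by split <;> norm_num
    by_cases h : j < (Zs.filter (fun i => y i ≠ x i)).card
    · obtain ⟨t, hts, htc⟩ := Finset.exists_subset_card_eq (show j+1 ≤ _ from h)
      have htmem : t ∈ Zs.powersetCard (j+1) :=
        Finset.mem_powersetCard.mpr ⟨hts.trans (Finset.filter_subset _ _), htc⟩
      have hprod : ∏ i ∈ t, (if y i ≠ x i then (1:ℝ) else 0) = 1 := by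
        apply Finset.prod_eq_one
        intro i hi
        have := (Finset.mem_filter.mp (hts hi)).2
        simp [this]
      have hs := Finset.single_le_sum hnn htmem
      rw [hprod] at hs
      rw [if_pos h]
      exact hs
    · rw [if_neg h]
      exact Finset.sum_nonneg hnn
  calc ∑ y : Fin n → Bool, flipProb n χ x y *
        (if j < (Zs.filter (fun i => y i ≠ x i)).card then (1:ℝ) else 0)
      ≤ ∑ y : Fin n → Bool, flipProb n χ x y *
        (∑ t ∈ Zs.powersetCard (j+1), ∏ i ∈ t, (if y i ≠ x i then (1:ℝ) else 0)) := by
        apply Finset.sum_le_sum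
        intro y _
        exact mul_le_mul_of_nonneg_left (point y) (flipProb_nonneg hχ0 hχ1 x y)
    _ = ∑ t ∈ Zs.powersetCard (j+1), ∑ y : Fin n → Bool,
          flipProb n χ x y * ∏ i ∈ t, (if y i ≠ x i then (1:ℝ) else 0) := by
        rw [Finset.sum_congr rfl (fun y _ => Finset.mul_sum _ _ _), Finset.sum_comm]
    _ = ∑ t ∈ Zs.powersetCard (j+1), χ^(j+1) := by
        apply Finset.sum_congr rfl
        intro t ht
        rw [sum_flip_prod]
        rw [(Finset.mem_powersetCard.mp ht).2]
    _ ≤ (Zs.card.choose (j+1) : ℝ) * χ^(j+1) := by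
        rw [Finset.sum_const, Finset.card_powersetCard, nsmul_eq_mul]

lemma drift_real (n k : ℕ) (χ : ℝ) (hχ0 : 0 < χ) (hχ1 : χ < 1) (hkn : k ≤ n)
    (h32 : ((k:ℝ)+1)*χ ≤ 3/2) (x : Fin n → Bool) :
    phiR n k x - (7/3)*χ ≤ ∑ y : Fin n → Bool, flipProb n χ x y * phiR n k (select n x y) := by
  classical
  set Zs : Finset (Fin n) := (Kset n k).filter (fun i => x i = false) with hZs
  set Z : ℕ := Zs.card with hZ
  have hZcx : Zc n k x = Z := rfl
  set Bf : (Fin n → Bool) → ℕ := fun y => (Zs.filter (fun i => y i ≠ x i)).card with hBf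
  have hBZ : ∀ y, Bf y ≤ Z := fun y => Finset.card_filter_le _ _
  -- Step A
  have stepA : ∀ y : Fin n → Bool,
      Real.log (1+(Z:ℝ)-(Bf y:ℝ)) ≤ phiR n k (select n x y) := by
    intro y
    have hpos : (0:ℝ) < 1+(Z:ℝ)-(Bf y:ℝ) := by
      have : (Bf y:ℝ) ≤ (Z:ℝ) := by exact_mod_cast hBZ y
      linarith
    rw [select]
    split
    · -- select = y
      have hsub : Z - Bf y ≤ Zc n k y := by
        have hcard : (Zs.filter (fun i => ¬(y i ≠ x i))).card = Z - Bf y := by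
          have e0 := Finset.card_filter_add_card_filter_not
            (s := Zs) (p := fun i => y i ≠ x i)
          have e1 : Bf y = (Zs.filter (fun i => y i ≠ x i)).card := rfl
          have e2 : Z = Zs.card := rfl
          omega
        have hsubset : Zs.filter (fun i => ¬(y i ≠ x i)) ⊆ (Kset n k).filter (fun i => y i = false) := by
          intro i hi
          rw [Finset.mem_filter] at hi ⊢
          obtain ⟨hiZs, hiy⟩ := hi
          rw [hZs, Finset.mem_filter] at hiZs
          push_neg at hiy
          exact ⟨hiZs.1, hiy.trans hiZs.2⟩
        rw [← hcard]
        exact Finset.card_le_card hsubset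
      rw [phiR]
      apply Real.log_le_log hpos
      have h1 : ((Z - Bf y : ℕ):ℝ) = (Z:ℝ)-(Bf y:ℝ) := by
        push_cast [Nat.cast_sub (hBZ y)]; ring
      have h2 : ((Z - Bf y : ℕ):ℝ) ≤ (Zc n k y : ℝ) := by exact_mod_cast hsub
      linarith
    · -- select = x
      rw [phiR, hZcx]
      apply Real.log_le_log hpos
      have : (0:ℝ) ≤ (Bf y:ℝ) := by positivity
      linarith
  -- main chain
  have key : phiR n k x - ∑ y : Fin n → Bool, flipProb n χ x y * phiR n k (select n x y)
      ≤ (7/3)*χ := by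
    have hxphi : phiR n k x = Real.log (1+(Z:ℝ)) := by rw [phiR, hZcx]
    calc phiR n k x - ∑ y : Fin n → Bool, flipProb n χ x y * phiR n k (select n x y)
        = ∑ y : Fin n → Bool, (flipProb n χ x y * phiR n k x
            - flipProb n χ x y * phiR n k (select n x y)) := by
          rw [Finset.sum_sub_distrib, ← Finset.sum_mul, sum_flipProb, one_mul]
      _ = ∑ y : Fin n → Bool, flipProb n χ x y * (phiR n k x - phiR n k (select n x y)) := by
          apply Finset.sum_congr rfl; intro y _; ring
      _ ≤ ∑ y : Fin n → Bool, flipProb n χ x y *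
            (∑ j ∈ range Z, (if j < Bf y then 1/((Z:ℝ)-(j:ℝ)) else 0)) := by
          apply Finset.sum_le_sum
          intro y _
          apply mul_le_mul_of_nonneg_left _ (flipProb_nonneg hχ0.le hχ1.le x y)
          have hA := stepA y
          have hB := log_telescope Z (Bf y) (hBZ y)
          rw [hxphi]
          linarith
      _ = ∑ j ∈ range Z, ∑ y : Fin n → Bool, flipProb n χ x y *
            (if j < Bf y then 1/((Z:ℝ)-(j:ℝ)) else 0) := by
          rw [Finset.sum_congr rfl (fun y _ => Finset.mul_sum _ _ _), Finset.sum_comm]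
      _ ≤ ∑ j ∈ range Z, (Z.choose (j+1) : ℝ) * χ^(j+1) * (1/((Z:ℝ)-(j:ℝ))) := by
          apply Finset.sum_le_sum
          intro j hj
          have hjZ : j < Z := mem_range.mp hj
          have hd : (0:ℝ) < (Z:ℝ)-(j:ℝ) := by
            have : (j:ℝ) < (Z:ℝ) := by exact_mod_cast hjZ
            linarith
          have hpt : ∀ y : Fin n → Bool, flipProb n χ x y *
              (if j < Bf y then 1/((Z:ℝ)-(j:ℝ)) else 0)
              = (1/((Z:ℝ)-(j:ℝ))) * (flipProb n χ x y * (if j < Bf y then (1:ℝ) else 0)) := by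
            intro y
            by_cases h : j < Bf y <;> simp [h] <;> ring
          rw [Finset.sum_congr rfl (fun y _ => hpt y), ← Finset.mul_sum]
          have htb := tail_bound n χ hχ0.le hχ1.le x Zs j
          calc (1/((Z:ℝ)-(j:ℝ))) * ∑ y : Fin n → Bool, flipProb n χ x y *
                (if j < Bf y then (1:ℝ) else 0)
              ≤ (1/((Z:ℝ)-(j:ℝ))) * ((Z.choose (j+1) : ℝ) * χ^(j+1)) := by
                apply mul_le_mul_of_nonneg_left _ (by positivity)
                exact htb
            _ = (Z.choose (j+1) : ℝ) * χ^(j+1) * (1/((Z:ℝ)-(j:ℝ))) := by ring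
      _ ≤ (7/3)*χ := numeric_sum Z k χ hχ0 ((hZcx ▸ Zc_le n k hkn x)) h32
  linarith [key]

lemma phiR_nonneg (n k : ℕ) (x : Fin n → Bool) : 0 ≤ phiR n k x :=
  Real.log_nonneg (by
    have : (0:ℝ) ≤ (Zc n k x : ℝ) := Nat.cast_nonneg _
    linarith)

lemma phiR_le (n k : ℕ) (hkn : k ≤ n) (x : Fin n → Bool) :
    phiR n k x ≤ Real.log (1 + (k:ℝ)) := by
  apply Real.log_le_log (by positivity)
  have : (Zc n k x : ℝ) ≤ (k : ℝ) := by exact_mod_cast Zc_le n k hkn x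
  linarith

lemma phiR_mem_zero {n k : ℕ} {x : Fin n → Bool} (hx : x ∈ firstKOnes n k) :
    phiR n k x = 0 := by
  have hZ : Zc n k x = 0 := by
    rw [Zc, Finset.card_eq_zero, Finset.filter_eq_empty_iff]
    intro i hi
    rw [Kset, Finset.mem_filter] at hi
    simp [hx i hi.2]
  simp [phiR, hZ]

lemma chord (n k : ℕ) (hk : 0 < k) (hkn : k ≤ n) (x : Fin n → Bool) :
    ((Zc n k x : ℝ)/k) * Real.log (1+(k:ℝ)) ≤ phiR n k x := by
  have hk' : (0:ℝ) < k := by exact_mod_cast hk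
  have hZk : (Zc n k x : ℝ) ≤ k := by exact_mod_cast Zc_le n k hkn x
  have hZ0 : (0:ℝ) ≤ (Zc n k x : ℝ) := by positivity
  have hcc := strictConcaveOn_log_Ioi.concaveOn.2 (Set.mem_Ioi.mpr one_pos)
    (show (1+(k:ℝ)) ∈ Set.Ioi 0 by simp; positivity)
    (show (0:ℝ) ≤ 1 - (Zc n k x : ℝ)/k by
      rw [sub_nonneg, div_le_one hk']; exact hZk)
    (show (0:ℝ) ≤ (Zc n k x : ℝ)/k by positivity)
    (by ring)
  have harg : (1 - (Zc n k x : ℝ)/k) • (1:ℝ) + ((Zc n k x : ℝ)/k) • (1+(k:ℝ))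
      = 1 + (Zc n k x : ℝ) := by
    rw [smul_eq_mul, smul_eq_mul]
    field_simp
    ring
  rw [harg] at hcc
  simp only [smul_eq_mul, Real.log_one, mul_zero, zero_add, mul_one] at hcc
  rw [phiR]
  exact hcc

noncomputable section
open Finset
open scoped ENNReal

variable (n k : ℕ) (χ : ℝ)

def phiE (n k : ℕ) (x : Fin n → Bool) : ℝ≥0∞ := ENNReal.ofReal (phiR n k x)

lemma step_phi (x : Fin n → Bool) :
    ∑ x' : Fin n → Bool, stepKer n χ x x' * phiE n k x'
      = ∑ y : Fin n → Bool, ENNReal.ofReal (flipProb n χ x y) * phiE n k (select n x y) := by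
  classical
  simp only [stepKer, Finset.sum_mul]
  rw [Finset.sum_comm]
  apply Finset.sum_congr rfl
  intro y _
  have : ∀ x' : Fin n → Bool,
      ENNReal.ofReal (flipProb n χ x y) * (if select n x y = x' then (1:ℝ≥0∞) else 0) * phiE n k x'
      = ENNReal.ofReal (flipProb n χ x y) * (if select n x y = x' then phiE n k x' else 0) := by
    intro x'
    by_cases h : select n x y = x' <;> simp [h]
  rw [Finset.sum_congr rfl (fun x' _ => this x'), ← Finset.mul_sum,
    Finset.sum_ite_eq univ (select n x y) (phiE n k), if_pos (Finset.mem_univ _)]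

lemma drift_ennreal (hχ0 : 0 < χ) (hχ1 : χ < 1) (hkn : k ≤ n)
    (h32 : ((k:ℝ)+1)*χ ≤ 3/2) (x : Fin n → Bool) :
    phiE n k x ≤ (∑ x' : Fin n → Bool, stepKer n χ x x' * phiE n k x')
      + ENNReal.ofReal ((7/3)*χ) := by
  rw [step_phi]
  have hsum : ∑ y : Fin n → Bool, ENNReal.ofReal (flipProb n χ x y) * phiE n k (select n x y)
      = ENNReal.ofReal (∑ y : Fin n → Bool, flipProb n χ x y * phiR n k (select n x y)) := by
    rw [ENNReal.ofReal_sum_of_nonneg (fun y _ =>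
      mul_nonneg (flipProb_nonneg hχ0.le hχ1.le x y) (phiR_nonneg n k _))]
    apply Finset.sum_congr rfl
    intro y _
    rw [ENNReal.ofReal_mul (flipProb_nonneg hχ0.le hχ1.le x y)]
    rfl
  rw [hsum, ← ENNReal.ofReal_add (Finset.sum_nonneg (fun y _ =>
      mul_nonneg (flipProb_nonneg hχ0.le hχ1.le x y) (phiR_nonneg n k _))) (by positivity)]
  apply ENNReal.ofReal_le_ofReal
  linarith [drift_real n k χ hχ0 hχ1 hkn h32 x]

noncomputable section
open Finset Filter
open scoped ENNReal Topology

/-- Fixed-target lower bound for the (1+1) EA with fixed mutation rate `0 < χ < 1`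
on BinVal (`2 ≤ k ≤ n`, `k ≤ 1/χ`):
`E[T_k] ≥ (1/2)·((1/χ) − 1)·ln k·(1 − e^{−1/2})`, i.e. `E[T_k] = Ω((log k)/χ)`. -/
theorem ea_fixed_rate_fixed_target_lower
    (n k : ℕ) (χ : ℝ) (hχ0 : 0 < χ) (hχ1 : χ < 1)
    (hk2 : 2 ≤ k) (hkn : k ≤ n) (hkχ : (k : ℝ) ≤ 1 / χ) :
    ENNReal.ofReal ((1 / 2) * (1 / χ - 1) * Real.log k * (1 - Real.exp (-(1 / 2)))) ≤
      hitTimeExp (uniformInit n) (stepKer n χ) (firstKOnes n k) := by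

  classical
  set A := firstKOnes n k with hA
  set al := alive (uniformInit n) (stepKer n χ) A with hal
  set Pf : ℕ → ℝ≥0∞ := fun t => ∑ x : Fin n → Bool, al t x with hPf
  set Phi : ℕ → ℝ≥0∞ := fun t => ∑ x : Fin n → Bool, al t x * phiE n k x with hPhi
  set D : ℝ≥0∞ := ENNReal.ofReal ((7/3)*χ) with hD
  set L : ℝ≥0∞ := ENNReal.ofReal (Real.log (1+(k:ℝ))) with hL
  -- basic numerics
  have hkχ1 : (k:ℝ) * χ ≤ 1 := by
    rw [← le_div_iff₀ hχ0]; exact hkχ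
  have hχhalf : χ ≤ 1/2 := by
    have h2k : (2:ℝ) ≤ k := by exact_mod_cast hk2
    nlinarith
  have h32 : ((k:ℝ)+1)*χ ≤ 3/2 := by nlinarith
  have hphiE_A : ∀ x ∈ A, phiE n k x = 0 := by
    intro x hx
    rw [phiE, phiR_mem_zero hx, ENNReal.ofReal_zero]
  -- Phi recursion
  have Phi_succ : ∀ t, Phi (t+1)
      = ∑ x : Fin n → Bool, al t x * (∑ x' : Fin n → Bool, stepKer n χ x x' * phiE n k x') := by
    intro t
    have h1 : Phi (t+1) = ∑ x' : Fin n → Bool,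
        (∑ x : Fin n → Bool, al t x * stepKer n χ x x') * phiE n k x' := by
      rw [hPhi]
      apply Finset.sum_congr rfl
      intro x' _
      by_cases hx' : x' ∈ A
      · rw [hphiE_A x' hx', mul_zero, mul_zero]
      · have : al (t+1) x' = ∑ x : Fin n → Bool, al t x * stepKer n χ x x' := by
          show (alive _ _ _ (t+1)) x' = _
          rw [alive, Set.indicator_of_mem (Set.mem_compl hx'), tsum_fintype]
        rw [this]
    rw [h1, Finset.sum_congr rfl (fun x' _ => Finset.sum_mul _ _ _), Finset.sum_comm]
    apply Finset.sum_congr rfl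
    intro x _
    rw [Finset.mul_sum]
    apply Finset.sum_congr rfl
    intro x' _
    rw [mul_assoc]
  -- drift
  have hdrift : ∀ t, Phi t ≤ Phi (t+1) + D * Pf t := by
    intro t
    rw [Phi_succ t]
    calc Phi t = ∑ x : Fin n → Bool, al t x * phiE n k x := rfl
      _ ≤ ∑ x : Fin n → Bool, al t x *
            ((∑ x' : Fin n → Bool, stepKer n χ x x' * phiE n k x') + D) := by
          apply Finset.sum_le_sum
          intro x _
          exact mul_le_mul_right (drift_ennreal n k χ hχ0 hχ1 hkn h32 x) _
      _ = (∑ x : Fin n → Bool, al t x *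
            (∑ x' : Fin n → Bool, stepKer n χ x x' * phiE n k x'))
          + ∑ x : Fin n → Bool, al t x * D := by
          rw [← Finset.sum_add_distrib]
          apply Finset.sum_congr rfl
          intro x _
          rw [mul_add]
      _ = _ := by
          congr 1
          rw [← Finset.sum_mul, mul_comm]
  have hPhiLe : ∀ t, Phi t ≤ L * Pf t := by
    intro t
    calc Phi t ≤ ∑ x : Fin n → Bool, al t x * L := by
          apply Finset.sum_le_sum
          intro x _
          exact mul_le_mul_right (ENNReal.ofReal_le_ofReal (phiR_le n k hkn x)) _
      _ = L * Pf t := by rw [← Finset.sum_mul, mul_comm]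
  have hind : ∀ T, Phi 0 ≤ Phi T + D * ∑ t ∈ range T, Pf t := by
    intro T
    induction T with
    | zero => simp
    | succ T ih =>
        calc Phi 0 ≤ Phi T + D * ∑ t ∈ range T, Pf t := ih
          _ ≤ (Phi (T+1) + D * Pf T) + D * ∑ t ∈ range T, Pf t :=
              add_le_add_left (hdrift T) _
          _ = Phi (T+1) + D * ∑ t ∈ range (T+1), Pf t := by
              rw [Finset.sum_range_succ, mul_add]
              ring
  -- Phi 0 lower bound
  have hPhi0 : ENNReal.ofReal ((1/2) * Real.log (1+(k:ℝ))) ≤ Phi 0 := by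
    have h1 : Phi 0 = ∑ x : Fin n → Bool, (2 : ℝ≥0∞)⁻¹ ^ n * phiE n k x := by
      rw [hPhi]
      apply Finset.sum_congr rfl
      intro x _
      by_cases hx : x ∈ A
      · rw [hphiE_A x hx, mul_zero, mul_zero]
      · have : al 0 x = uniformInit n x := by
          show (alive _ _ _ 0) x = _
          rw [alive, Set.indicator_of_mem (Set.mem_compl hx)]
        rw [this]; rfl
    have h2 : ∑ x : Fin n → Bool, phiE n k x
        = ENNReal.ofReal (∑ x : Fin n → Bool, phiR n k x) := by
      rw [ENNReal.ofReal_sum_of_nonneg (fun x _ => phiR_nonneg n k x)]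
      rfl
    have h3 : Real.log (1+(k:ℝ)) * 2^(n-1) ≤ ∑ x : Fin n → Bool, phiR n k x := by
      have hk0 : 0 < k := by omega
      have hk0' : (0:ℝ) < k := by exact_mod_cast hk0
      have hc : ∀ x : Fin n → Bool, ((Zc n k x : ℝ)/k) * Real.log (1+(k:ℝ)) ≤ phiR n k x :=
        chord n k hk0 hkn
      calc Real.log (1+(k:ℝ)) * 2^(n-1)
          = ∑ x : Fin n → Bool, ((Zc n k x : ℝ)/k) * Real.log (1+(k:ℝ)) := by
            rw [← Finset.sum_mul, ← Finset.sum_div, sum_Zc n k hkn]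
            field_simp
        _ ≤ _ := Finset.sum_le_sum (fun x _ => hc x)
    have h4 : (2 : ℝ≥0∞)⁻¹ ^ n = ENNReal.ofReal ((2:ℝ)⁻¹ ^ n) := by
      rw [ENNReal.ofReal_pow (by norm_num), ENNReal.ofReal_inv_of_pos (by norm_num)]
      norm_num
    have h5 : (2:ℝ)⁻¹ ^ n * (Real.log (1+(k:ℝ)) * 2^(n-1)) = (1/2) * Real.log (1+(k:ℝ)) := by
      obtain ⟨m, rfl⟩ : ∃ m, n = m + 1 := ⟨n - 1, by omega⟩
      have : (2:ℝ)⁻¹ ^ (m+1) * 2^(m+1-1) = 1/2 := by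
        simp only [Nat.add_sub_cancel, pow_succ, inv_pow]
        field_simp
      linear_combination Real.log (1+(k:ℝ)) * this
    rw [h1, ← Finset.mul_sum, h2, h4, ← ENNReal.ofReal_mul (by positivity), ← h5]
    apply ENNReal.ofReal_le_ofReal
    have hnn : (0:ℝ) ≤ (2:ℝ)⁻¹ ^ n := by positivity
    exact mul_le_mul_of_nonneg_left h3 hnn
  -- rewrite hitTimeExp
  have hE : hitTimeExp (uniformInit n) (stepKer n χ) A = ∑' t, Pf t := by
    rw [hitTimeExp]
    exact tsum_congr (fun t => tsum_fintype _)
  rw [hA] at hE ⊢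
  rw [hE]
  by_cases htop : ∑' t, Pf t = ⊤
  · rw [htop]; exact le_top
  -- limits
  have hPftend : Tendsto Pf atTop (𝓝 0) := ENNReal.tendsto_atTop_zero_of_tsum_ne_top htop
  have hLtop : L ≠ ⊤ := ENNReal.ofReal_ne_top
  have hDtop : D ≠ ⊤ := ENNReal.ofReal_ne_top
  have hPhitend : Tendsto Phi atTop (𝓝 0) := by
    have h0 : Tendsto (fun t => L * Pf t) atTop (𝓝 (L * 0)) :=
      ENNReal.Tendsto.const_mul hPftend (Or.inr hLtop)
    rw [mul_zero] at h0
    exact tendsto_of_tendsto_of_tendsto_of_le_of_le tendsto_const_nhds h0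
      (fun t => zero_le) hPhiLe
  have hsumtend : Tendsto (fun T => ∑ t ∈ range T, Pf t) atTop (𝓝 (∑' t, Pf t)) :=
    ENNReal.tendsto_nat_tsum Pf
  have hRHS : Tendsto (fun T => Phi T + D * ∑ t ∈ range T, Pf t) atTop
      (𝓝 (0 + D * ∑' t, Pf t)) :=
    Tendsto.add hPhitend (ENNReal.Tendsto.const_mul hsumtend (Or.inr hDtop))
  rw [zero_add] at hRHS
  have hfin : Phi 0 ≤ D * ∑' t, Pf t := ge_of_tendsto' hRHS hind
  -- final numerics
  have hexp47 : (4:ℝ)/7 ≤ Real.exp (-(1/2)) := by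
    have h1 : Real.exp 1 < 2.7182818286 := Real.exp_one_lt_d9
    have h2 : Real.exp (1/2) ^ 2 = Real.exp 1 := by rw [sq, ← Real.exp_add]; norm_num
    have h3 : Real.exp (1/2) ≤ 7/4 := by nlinarith [Real.exp_pos (1/2)]
    rw [Real.exp_neg, show (4:ℝ)/7 = (7/4)⁻¹ by norm_num]
    exact inv_anti₀ (Real.exp_pos _) h3
  have hb0 : (0:ℝ) ≤ 1 - Real.exp (-(1/2)) := by
    have : Real.exp (-(1/2)) ≤ Real.exp 0 := Real.exp_le_exp.mpr (by norm_num)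
    rw [Real.exp_zero] at this
    linarith
  have hlk0 : (0:ℝ) ≤ Real.log k := Real.log_nonneg (by exact_mod_cast Nat.one_le_of_lt hk2)
  have hloglog : Real.log (k:ℝ) ≤ Real.log (1+(k:ℝ)) := by
    apply Real.log_le_log (by exact_mod_cast Nat.lt_of_lt_of_le Nat.zero_lt_two hk2)
    linarith
  have hreal : (7/3)*χ * ((1/2)*(1/χ - 1)*Real.log k*(1 - Real.exp (-(1/2))))
      ≤ (1/2)*Real.log (1+(k:ℝ)) := by
    set lk := Real.log (k:ℝ)
    set b := 1 - Real.exp (-(1/2)) with hbdef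
    have hb : b ≤ 3/7 := by rw [hbdef]; linarith
    have hχinv : χ * (1/χ) = 1 := mul_one_div_cancel hχ0.ne'
    have e : (7/3)*χ*((1/2)*(1/χ-1)*lk*b) = (7/6)*(1-χ)*(lk*b) := by
      linear_combination ((7/6)*lk*b) * hχinv
    rw [e]
    nlinarith [mul_le_mul_of_nonneg_left hb hlk0, mul_nonneg hlk0 hb0, hχ0, hχ1, hloglog]
  have hD0 : D ≠ 0 := (ENNReal.ofReal_pos.mpr (by positivity)).ne'
  have hDG : D * ENNReal.ofReal ((1 / 2) * (1 / χ - 1) * Real.log k * (1 - Real.exp (-(1 / 2))))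
      ≤ D * (∑' t, Pf t) := by
    calc D * ENNReal.ofReal ((1 / 2) * (1 / χ - 1) * Real.log k * (1 - Real.exp (-(1 / 2))))
        = ENNReal.ofReal ((7/3)*χ * ((1 / 2) * (1 / χ - 1) * Real.log k * (1 - Real.exp (-(1 / 2))))) := by
          rw [hD, ← ENNReal.ofReal_mul (by positivity)]
      _ ≤ ENNReal.ofReal ((1/2)*Real.log (1+(k:ℝ))) := ENNReal.ofReal_le_ofReal hreal
      _ ≤ Phi 0 := hPhi0
      _ ≤ D * ∑' t, Pf t := hfin
  exact (ENNReal.mul_le_mul_iff_right hD0 hDtop).mp hDG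

end
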